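/- Let A and B be dual Banach algebras and θ : A → B a continuous surjective algebra homomorphism that is also weak*-continuous. If A is Johnson pseudo-Connes amenable, then B is Johnson pseudo-Connes amenable. -/

import Mathlib

open Filter Topology ContinuousLinearMap

set_option maxHeartbeats 1000000
set_option linter.unusedVariables false
set_option linter.unusedSectionVars false
set_option synthInstance.maxHeartbeats 200000

noncomputable section

section DualBanach

variable {A : Type*} [NonUnitalNormedRing A] [NormedSpace ℂ A]
  [IsScalarTower ℂ A A] [SMulCommClass ℂ A A]

/-- Left multiplication `x ↦ a * x` as a continuous linear map. -/
def mulL (a : A) : A →L[ℂ] A := ContinuousLinearMap.mul ℂ A a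

/-- Right multiplication `x ↦ x * a` as a continuous linear map. -/
def mulR (a : A) : A →L[ℂ] A := (ContinuousLinearMap.mul ℂ A).flip a

@[simp] lemma mulL_apply (a x : A) : mulL a x = a * x := rfl
@[simp] lemma mulR_apply (a x : A) : mulR a x = x * a := rfl

/-- The canonical evaluation of `a : A` on a submodule of the dual, giving a
functional on that submodule. -/
def evalOn (S : Submodule ℂ (A →L[ℂ] ℂ)) (a : A) : S →L[ℂ] ℂ :=
  (ContinuousLinearMap.apply ℂ ℂ a).comp S.subtypeL

/-- A dual Banach algebra structure on `A`: a closed submodule `carrier` of the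
dual `A⋆` (closed under the module actions) such that `A` is canonically
isometrically isomorphic to the dual of `carrier`. -/
structure DualStructure (A : Type*) [NonUnitalNormedRing A] [NormedSpace ℂ A]
    [IsScalarTower ℂ A A] [SMulCommClass ℂ A A] where
  carrier : Submodule ℂ (A →L[ℂ] ℂ)
  isClosed' : IsClosed (carrier : Set (A →L[ℂ] ℂ))
  lact_mem' : ∀ (a : A) (f : A →L[ℂ] ℂ), f ∈ carrier → f.comp (mulR a) ∈ carrier
  ract_mem' : ∀ (a : A) (f : A →L[ℂ] ℂ), f ∈ carrier → f.comp (mulL a) ∈ carrier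
  bijective' : Function.Bijective (fun a : A => evalOn carrier a)
  isometry' : ∀ a : A,
    sSup {r : ℝ | ∃ f : A →L[ℂ] ℂ, f ∈ carrier ∧ ‖f‖ ≤ 1 ∧ r = ‖f a‖} = ‖a‖

/-- `A`, regarded with its weak-star topology `σ(A, A_*)`. -/
def WkA (P : DualStructure A) : Type _ := A

/-- The identity map `WkA P → A`. -/
def WkA.un (P : DualStructure A) : WkA P → A := fun a => a

/-- The identity map `A → WkA P`. -/
def WkA.mk (P : DualStructure A) : A → WkA P := fun a => a

instance (P : DualStructure A) : TopologicalSpace (WkA P) :=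
  TopologicalSpace.induced
    (fun a => fun f : P.carrier => (f : A →L[ℂ] ℂ) (WkA.un P a)) inferInstance

/-- Weak-star continuity of a map out of a dual Banach algebra. -/
def WkCont (P : DualStructure A) {E : Type*} [TopologicalSpace E] (g : A → E) : Prop :=
  Continuous fun a : WkA P => g (WkA.un P a)

/-- The dual of the projective tensor product `A ⊗̂ A`, realized as the space of
bounded bilinear functionals on `A × A`. -/
abbrev TDual (A : Type*) [NonUnitalNormedRing A] [NormedSpace ℂ A]
    [IsScalarTower ℂ A A] [SMulCommClass ℂ A A] := A →L[ℂ] A →L[ℂ] ℂ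

/-- The left action `a · T` of `A` on `(A ⊗̂ A)⋆`: `(a·T)(b ⊗ c) = T(b ⊗ ca)`. -/
def lactOp (a : A) : TDual A →L[ℂ] TDual A :=
  compL ℂ A (A →L[ℂ] ℂ) (A →L[ℂ] ℂ) ((compL ℂ A A ℂ).flip (mulR a))

/-- The right action `T · a` of `A` on `(A ⊗̂ A)⋆`: `(T·a)(b ⊗ c) = T(ab ⊗ c)`. -/
def ractOp (a : A) : TDual A →L[ℂ] TDual A :=
  (compL ℂ A A (A →L[ℂ] ℂ)).flip (mulL a)

@[simp] lemma lactOp_apply (a : A) (T : TDual A) (b c : A) :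
    lactOp a T b c = T b (c * a) := rfl

@[simp] lemma ractOp_apply (a : A) (T : TDual A) (b c : A) :
    ractOp a T b c = T (a * b) c := rfl

/-- `σwc((A ⊗̂ A)⋆)`: the set of bilinear functionals `T` for which both
`a ↦ a·T` and `a ↦ T·a` are weak-star–weak continuous. -/
def sigmaWC (P : DualStructure A) : Set (TDual A) :=
  {T | ∀ Φ : TDual A →L[ℂ] ℂ,
    WkCont P (fun a => Φ (lactOp a T)) ∧ WkCont P (fun a => Φ (ractOp a T))}

/-- `σwc((A ⊗̂ A)⋆)` as a submodule. -/
def sigmaWCsub (P : DualStructure A) : Submodule ℂ (TDual A) where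
  carrier := sigmaWC P
  zero_mem' := by
    intro Φ
    constructor <;>
    · show Continuous _
      have : (fun x : WkA P => Φ ((0 : TDual A →L[ℂ] TDual A) 0)) = fun _ => (0 : ℂ) := by
        funext x; simp
      simp only [map_zero]
      exact continuous_const
  add_mem' := by
    intro T S hT hS Φ
    constructor
    · have h := ((hT Φ).1).add ((hS Φ).1)
      show Continuous _
      convert h using 1; funext x; simp [map_add]
    · have h := ((hT Φ).2).add ((hS Φ).2)
      show Continuous _
      convert h using 1; funext x; simp [map_add]
  smul_mem' := by
    intro c T hT Φ
    constructor
    · have h := ((hT Φ).1).const_smul c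
      show Continuous _
      convert h using 1; funext x; simp [map_smul]
    · have h := ((hT Φ).2).const_smul c
      show Continuous _
      convert h using 1; funext x; simp [map_smul]

lemma wkCont_of_mem (P : DualStructure A) {f : A →L[ℂ] ℂ} (hf : f ∈ P.carrier) :
    WkCont P (fun a => f a) := by
  have h1 : Continuous fun a : WkA P =>
      (fun g : P.carrier => (g : A →L[ℂ] ℂ) (WkA.un P a)) := continuous_induced_dom
  exact (continuous_apply (⟨f, hf⟩ : P.carrier)).comp h1

lemma wkCont_mulL (P : DualStructure A) (a : A) :
    Continuous fun x : WkA P => WkA.mk P (a * WkA.un P x) := by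
  apply continuous_induced_rng.2
  apply continuous_pi
  intro g
  exact wkCont_of_mem P (P.ract_mem' a g.1 g.2)

lemma wkCont_mulR (P : DualStructure A) (a : A) :
    Continuous fun x : WkA P => WkA.mk P (WkA.un P x * a) := by
  apply continuous_induced_rng.2
  apply continuous_pi
  intro g
  exact wkCont_of_mem P (P.lact_mem' a g.1 g.2)

lemma ract_mem_sigmaWC (P : DualStructure A) {T : TDual A}
    (hT : T ∈ sigmaWC P) (a : A) : ractOp a T ∈ sigmaWC P := by
  intro Φ
  constructor
  · have key : ∀ a' : A, lactOp a' (ractOp a T) = ractOp a (lactOp a' T) := by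
      intro a'; ext b c; simp
    have h := (hT (Φ.comp (ractOp a))).1
    show Continuous _
    have h' : Continuous _ := h
    convert h' using 1; funext x; exact congrArg Φ (key _)
  · have key : ∀ a' : A, ractOp a' (ractOp a T) = ractOp (a * a') T := by
      intro a'; ext b c; simp [mul_assoc]
    have h := ((hT Φ).2).comp (wkCont_mulL P a)
    show Continuous _
    have h' : Continuous _ := h
    convert h' using 1; funext x; exact congrArg Φ (key _)

lemma lact_mem_sigmaWC (P : DualStructure A) {T : TDual A}
    (hT : T ∈ sigmaWC P) (a : A) : lactOp a T ∈ sigmaWC P := by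
  intro Φ
  constructor
  · have key : ∀ a' : A, lactOp a' (lactOp a T) = lactOp (a' * a) T := by
      intro a'; ext b c; simp [mul_assoc]
    have h := ((hT Φ).1).comp (wkCont_mulR P a)
    show Continuous _
    have h' : Continuous _ := h
    convert h' using 1; funext x; exact congrArg Φ (key _)
  · have key : ∀ a' : A, ractOp a' (lactOp a T) = lactOp a (ractOp a' T) := by
      intro a'; ext b c; simp
    have h := (hT (Φ.comp (lactOp a))).2
    show Continuous _
    have h' : Continuous _ := h
    convert h' using 1; funext x; exact congrArg Φ (key _)

/-- The adjoint of the multiplication map `π : A ⊗̂ A → A` applied to a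
functional: `π⋆(f)(b ⊗ c) = f (b c)`. -/
def piStar (f : A →L[ℂ] ℂ) : TDual A :=
  (compL ℂ A A ℂ f).comp (ContinuousLinearMap.mul ℂ A)

@[simp] lemma piStar_apply (f : A →L[ℂ] ℂ) (b c : A) : piStar f b c = f (b * c) := rfl

/-- Johnson pseudo-Connes amenability of a dual Banach algebra: there is a (not
necessarily bounded) net `(m i)` in `(A ⊗̂ A)⋆⋆` such that
`⟨T, a·mᵢ⟩ = ⟨T, mᵢ·a⟩` for all `T ∈ σwc((A ⊗̂ A)⋆)` and
`i⋆_{A_*} π⋆⋆(mᵢ) a → a` in norm for every `a`; the element `b i ∈ A`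
represents `i⋆_{A_*} π⋆⋆(mᵢ)` via `f (b i) = mᵢ (π⋆ f)` for all `f ∈ A_*`. -/
def IsJPCA (P : DualStructure A) : Prop :=
  ∃ (ι : Type) (pr : Preorder ι), Nonempty ι ∧
    (∀ i j : ι, ∃ k, pr.le i k ∧ pr.le j k) ∧
    ∃ (m : ι → (TDual A →L[ℂ] ℂ)) (b : ι → A),
      (∀ i (a : A), ∀ T ∈ sigmaWC P, m i (ractOp a T) = m i (lactOp a T)) ∧
      (∀ i, ∀ f ∈ P.carrier, f (b i) = m i (piStar f)) ∧
      (∀ a : A, Tendsto (fun i => b i * a) (@Filter.atTop ι pr) (nhds a))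

end DualBanach

section Statements

variable {A : Type*} [NonUnitalNormedRing A] [NormedSpace ℂ A]
  [IsScalarTower ℂ A A] [SMulCommClass ℂ A A]
variable {B : Type*} [NonUnitalNormedRing B] [NormedSpace ℂ B]
  [IsScalarTower ℂ B B] [SMulCommClass ℂ B B]

/-- Any weak-star continuous functional on `A` belongs to the predual `P.carrier`. -/
lemma mem_carrier_of_wkCont (P : DualStructure A) (f : A →L[ℂ] ℂ)
    (hf : WkCont P fun a => f a) : f ∈ P.carrier := by
  classical
  set g : WkA P → (P.carrier → ℂ) :=
    fun a => fun φ : P.carrier => (φ : A →L[ℂ] ℂ) (WkA.un P a) with hg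
  have hcont : Continuous fun a : WkA P => f (WkA.un P a) := hf
  have hnhds : (fun a : WkA P => f (WkA.un P a)) ⁻¹' (Metric.ball (0 : ℂ) 1)
      ∈ 𝓝 (WkA.mk P 0) := by
    apply hcont.continuousAt.preimage_mem_nhds
    have : f (WkA.un P (WkA.mk P 0)) = 0 := by simp [WkA.un, WkA.mk]
    rw [this]
    exact Metric.ball_mem_nhds _ one_pos
  have hind : 𝓝 (WkA.mk P 0) = Filter.comap g (𝓝 (g (WkA.mk P 0))) := nhds_induced g _
  rw [hind, Filter.mem_comap] at hnhds
  obtain ⟨s, hs, hsub⟩ := hnhds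
  have hg0 : g (WkA.mk P 0) = 0 := by
    funext φ; simp [hg, WkA.un, WkA.mk]
  rw [hg0, nhds_pi] at hs
  obtain ⟨I, hIfin, t, ht, htsub⟩ := Filter.mem_pi.1 hs
  -- every `a` killed by all functionals in `I` is killed by `f`
  have hker : ∀ a : A, (∀ φ ∈ I, (φ : A →L[ℂ] ℂ) a = 0) → f a = 0 := by
    intro a ha
    by_contra hfa
    have hmem : ∀ c : ℂ, g (WkA.mk P (c • a)) ∈ Set.pi I t := by
      intro c φ hφ
      have : (φ : A →L[ℂ] ℂ) (c • a) = c • (φ : A →L[ℂ] ℂ) a := map_smul _ _ _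
      have h0 : g (WkA.mk P (c • a)) φ = 0 := by
        simp [hg, WkA.un, WkA.mk, this, ha φ hφ]
      rw [h0]
      exact mem_of_mem_nhds (ht φ)
    have hball : ∀ c : ℂ, f (c • a) ∈ Metric.ball (0 : ℂ) 1 := by
      intro c
      exact hsub (htsub (hmem c))
    have := hball ((2 : ℂ) / f a)
    rw [map_smul, smul_eq_mul, div_mul_cancel₀ (2 : ℂ) hfa] at this
    simp only [Metric.mem_ball, dist_zero_right] at this
    norm_num at this
  -- express `f` as a linear combination of the finitely many functionals
  have _ : Finite ↥I := hIfin.to_subtype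
  set L : ↥I → A →ₗ[ℂ] ℂ := fun φ => ((φ : P.carrier) : A →L[ℂ] ℂ) with hL
  have hle : ⨅ φ, LinearMap.ker (L φ) ≤ LinearMap.ker (f : A →ₗ[ℂ] ℂ) := by
    intro a ha
    rw [Submodule.mem_iInf] at ha
    refine LinearMap.mem_ker.2 (hker a fun φ hφ => ?_)
    exact LinearMap.mem_ker.1 (ha ⟨φ, hφ⟩)
  have hspan := mem_span_of_iInf_ker_le_ker (𝕜 := ℂ) hle
  have hmap : Submodule.span ℂ (Set.range L) ≤
      P.carrier.map (ContinuousLinearMap.coeLM ℂ) := by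
    rw [Submodule.span_le]
    rintro _ ⟨φ, rfl⟩
    exact ⟨(φ : P.carrier), (φ : P.carrier).2, rfl⟩
  obtain ⟨h, hh, heq⟩ := hmap hspan
  have : h = f := by
    ext x
    exact congrFun (congrArg DFunLike.coe heq) x
  exact this ▸ hh

/-- The pullback `(θ ⊗ θ)⋆ : (B ⊗̂ B)⋆ → (A ⊗̂ A)⋆`. -/
def pullTheta (θ : A →L[ℂ] B) : TDual B →L[ℂ] TDual A :=
  ((compL ℂ A (B →L[ℂ] ℂ) (A →L[ℂ] ℂ)) ((compL ℂ A B ℂ).flip θ)).comp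
    ((compL ℂ A B (B →L[ℂ] ℂ)).flip θ)

@[simp] lemma pullTheta_apply (θ : A →L[ℂ] B) (T : TDual B) (x y : A) :
    pullTheta θ T x y = T (θ x) (θ y) := rfl

/-- Let `A` and `B` be dual Banach algebras and
`θ : A → B` a continuous surjective algebra homomorphism which is also
weak-star–weak-star continuous.  If `A` is Johnson pseudo-Connes amenable,
then so is `B`. -/
theorem johnsonPseudoConnesAmenable_of_epimorphism
    [CompleteSpace A] [CompleteSpace B]
    (P : DualStructure A) (Q : DualStructure B)
    (θ : A →L[ℂ] B)
    (hmul : ∀ a b : A, θ (a * b) = θ a * θ b)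
    (hsurj : Function.Surjective θ)
    (hwk : Continuous fun a : WkA P => WkA.mk Q (θ (WkA.un P a)))
    (h : IsJPCA P) : IsJPCA Q := by
  obtain ⟨ι, pr, hne, hdir, m, b, hmod, hpi, hconv⟩ := h
  -- key identities for the pullback
  have hract : ∀ (a : A) (T : TDual B),
      pullTheta θ (ractOp (θ a) T) = ractOp a (pullTheta θ T) := by
    intro a T; ext x y
    simp [hmul]
  have hlact : ∀ (a : A) (T : TDual B),
      pullTheta θ (lactOp (θ a) T) = lactOp a (pullTheta θ T) := by
    intro a T; ext x y
    simp [hmul]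
  have hpiStar : ∀ g : B →L[ℂ] ℂ,
      pullTheta θ (piStar g) = piStar (g.comp θ) := by
    intro g; ext x y
    simp [hmul]
  -- pullback maps σwc to σwc
  have hsig : ∀ T ∈ sigmaWC Q, pullTheta θ T ∈ sigmaWC P := by
    intro T hT Φ
    constructor
    · have h1 := (hT (Φ.comp (pullTheta θ))).1
      have h2 : Continuous fun a : WkA P =>
          (Φ.comp (pullTheta θ)) (lactOp (WkA.un Q (WkA.mk Q (θ (WkA.un P a)))) T) :=
        h1.comp hwk
      show Continuous _
      have : (fun a : WkA P => Φ (lactOp (WkA.un P a) (pullTheta θ T))) =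
          fun a : WkA P =>
            (Φ.comp (pullTheta θ)) (lactOp (WkA.un Q (WkA.mk Q (θ (WkA.un P a)))) T) := by
        funext a
        show Φ (lactOp (WkA.un P a) (pullTheta θ T)) =
          Φ (pullTheta θ (lactOp (θ (WkA.un P a)) T))
        rw [hlact (WkA.un P a) T]
      rw [this]
      exact h2
    · have h1 := (hT (Φ.comp (pullTheta θ))).2
      have h2 : Continuous fun a : WkA P =>
          (Φ.comp (pullTheta θ)) (ractOp (WkA.un Q (WkA.mk Q (θ (WkA.un P a)))) T) :=
        h1.comp hwk
      show Continuous _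
      have : (fun a : WkA P => Φ (ractOp (WkA.un P a) (pullTheta θ T))) =
          fun a : WkA P =>
            (Φ.comp (pullTheta θ)) (ractOp (WkA.un Q (WkA.mk Q (θ (WkA.un P a)))) T) := by
        funext a
        show Φ (ractOp (WkA.un P a) (pullTheta θ T)) =
          Φ (pullTheta θ (ractOp (θ (WkA.un P a)) T))
        rw [hract (WkA.un P a) T]
      rw [this]
      exact h2
  refine ⟨ι, pr, hne, hdir, fun i => (m i).comp (pullTheta θ), fun i => θ (b i),
    ?_, ?_, ?_⟩
  · intro i b' T hT
    obtain ⟨a, rfl⟩ := hsurj b'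
    simp only [ContinuousLinearMap.comp_apply]
    rw [hract a T, hlact a T]
    exact hmod i a _ (hsig T hT)
  · intro i g hg
    have hgθ : g.comp θ ∈ P.carrier := by
      apply mem_carrier_of_wkCont
      have h1 : Continuous fun b : WkA Q => g (WkA.un Q b) := wkCont_of_mem Q hg
      exact h1.comp hwk
    have := hpi i (g.comp θ) hgθ
    simp only [ContinuousLinearMap.comp_apply] at this ⊢
    rw [hpiStar g]
    exact this
  · intro b'
    obtain ⟨a, rfl⟩ := hsurj b'
    have h1 : Tendsto (fun i => θ (b i * a)) (@Filter.atTop ι pr) (nhds (θ a)) :=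
      (θ.continuous.tendsto a).comp (hconv a)
    have : (fun i => θ (b i) * θ a) = fun i => θ (b i * a) := by
      funext i; rw [hmul]
    rw [this]
    exact h1

end Statements
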